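/- (Generalized Drawdown Modulation Lemma, one-step necessity.) Let V > 0 and V_max ≥ V be reals, set d = (V_max − V)/V_max, and assume d ≤ d_max. If the investment vector I ∈ ℝⁿ is such that for every return vector x in the box {x ∈ ℝⁿ : X_min,i ≤ x_i ≤ X_max,i for all i} the updated drawdown d' = (V_max' − V')/V_max' (with V' = V + ⟨I, x⟩ and V_max' = max(V_max, V')) satisfies d' ≤ d_max, then I necessarily satisfies ⟨|X_min|, I⁺⟩ − ⟨X_max, I⁻⟩ ≤ M·V, where M = (d_max − d)/(1 − d). -/

import Mathlib

theorem generalized_one_step_necessity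
    (n : ℕ) (Xmin Xmax : Fin n → ℝ) (dmax V Vm : ℝ) (I : Fin n → ℝ)
    (hb : ∀ i, -1 < Xmin i ∧ Xmin i < 0 ∧ 0 < Xmax i)
    (hdmax0 : 0 < dmax) (hdmax1 : dmax < 1)
    (hV : 0 < V) (hVm : V ≤ Vm)
    (d : ℝ) (hd_def : d = (Vm - V) / Vm)
    (hd : d ≤ dmax)
    (hsafe : ∀ x : Fin n → ℝ, (∀ i, Xmin i ≤ x i ∧ x i ≤ Xmax i) →
      (max Vm (V + ∑ i, I i * x i) - (V + ∑ i, I i * x i)) /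
        max Vm (V + ∑ i, I i * x i) ≤ dmax) :
    (∑ i, |Xmin i| * max (I i) 0) - (∑ i, Xmax i * min (I i) 0)
      ≤ ((dmax - d) / (1 - d)) * V := by
  have hVm0 : 0 < Vm := lt_of_lt_of_le hV hVm
  set x : Fin n → ℝ := fun i => if 0 ≤ I i then Xmin i else Xmax i with hx
  have hbox : ∀ i, Xmin i ≤ x i ∧ x i ≤ Xmax i := by
    intro i
    obtain ⟨h1, h2, h3⟩ := hb i
    by_cases h : 0 ≤ I i <;> simp [hx, h] <;> linarith
  have hS : (∑ i, I i * x i) =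
      -((∑ i, |Xmin i| * max (I i) 0) - (∑ i, Xmax i * min (I i) 0)) := by
    rw [neg_sub, ← Finset.sum_sub_distrib]
    apply Finset.sum_congr rfl
    intro i _
    obtain ⟨h1, h2, h3⟩ := hb i
    by_cases h : 0 ≤ I i
    · simp [hx, h, max_eq_left h, min_eq_right h, abs_of_neg h2]; ring
    · push_neg at h
      simp [hx, not_le.mpr h, max_eq_right h.le, min_eq_left h.le]; ring
  set L : ℝ := (∑ i, |Xmin i| * max (I i) 0) - (∑ i, Xmax i * min (I i) 0) with hL
  have hsafe' := hsafe x hbox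
  rw [hS] at hsafe'
  have hd1 : 1 - d = V / Vm := by rw [hd_def]; field_simp; ring
  have hRHS : ((dmax - d) / (1 - d)) * V = dmax * Vm - (Vm - V) := by
    rw [hd1, hd_def]; field_simp
  rw [hRHS]
  by_cases hcase : Vm ≤ V + -L
  · linarith [mul_pos hdmax0 hVm0]
  · push_neg at hcase
    rw [max_eq_left hcase.le] at hsafe'
    have := (div_le_iff₀ hVm0).mp hsafe'
    linarith
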